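/- Let f : I → I be a continuous map of a compact interval and p a fixed point of f. Define the unstable manifold W^u(p,f) as the set of points x such that for every open neighborhood V of p there exists n ≥ 1 with x ∈ f^n(V). Then W^u(p,f) is a connected set containing p and is invariant under f, i.e., f(W^u(p,f)) ⊆ W^u(p,f). -/

import Mathlib

/-- The unstable manifold of a fixed point `p` of `f` on the interval `I`:
points `x ∈ I` such that for every open neighborhood `V` of `p` (in `ℝ`),
`x ∈ f^[n] '' (V ∩ I)` for some `n ≥ 1`. -/
def unstableManifold (f : ℝ → ℝ) (I : Set ℝ) (p : ℝ) : Set ℝ :=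
  {x ∈ I | ∀ V : Set ℝ, IsOpen V → p ∈ V → ∃ n : ℕ, 1 ≤ n ∧ x ∈ f^[n] '' (V ∩ I)}

theorem unstableManifold_connected_mem_invariant
    (a b : ℝ) (hab : a ≤ b) (f : ℝ → ℝ) (p : ℝ)
    (hf : ContinuousOn f (Set.Icc a b))
    (hmap : Set.MapsTo f (Set.Icc a b) (Set.Icc a b))
    (hp : p ∈ Set.Icc a b) (hfp : f p = p) :
    IsConnected (unstableManifold f (Set.Icc a b) p) ∧
    p ∈ unstableManifold f (Set.Icc a b) p ∧
    f '' unstableManifold f (Set.Icc a b) p ⊆ unstableManifold f (Set.Icc a b) p := by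
  set I := Set.Icc a b with hI
  have hIord : Set.OrdConnected I := Set.ordConnected_Icc
  have hiterC : ∀ n : ℕ, ContinuousOn f^[n] I := by
    intro n
    induction n with
    | zero => simpa using continuousOn_id
    | succ n ih =>
      rw [Function.iterate_succ']
      exact hf.comp ih (hmap.iterate n)
  have hiterp : ∀ n : ℕ, f^[n] p = p := fun n => Function.iterate_fixed hfp n
  have hpmem : p ∈ unstableManifold f I p := by
    refine ⟨hp, fun V hV hpV => ⟨1, le_refl 1, p, ⟨hpV, hp⟩, by simpa using hfp⟩⟩
  have hinv : f '' unstableManifold f I p ⊆ unstableManifold f I p := by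
    rintro _ ⟨x, ⟨hxI, hx⟩, rfl⟩
    refine ⟨hmap hxI, fun V hV hpV => ?_⟩
    obtain ⟨n, hn1, y, hyV, hyx⟩ := hx V hV hpV
    exact ⟨n + 1, by omega, y, hyV, by
      rw [Function.iterate_succ', Function.comp_apply, hyx]⟩
  have hord : Set.OrdConnected (unstableManifold f I p) := by
    constructor
    rintro x ⟨hxI, hx⟩ y ⟨hyI, hy⟩ z hz
    refine ⟨hIord.out hxI hyI hz, fun V hV hpV => ?_⟩
    obtain ⟨ε, hε, hball⟩ := Metric.isOpen_iff.mp hV p hpV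
    set V₀ := Set.Ioo (p - ε) (p + ε) with hV₀
    have hV₀open : IsOpen V₀ := isOpen_Ioo
    have hpV₀ : p ∈ V₀ := by constructor <;> simp <;> linarith
    have hV₀sub : V₀ ⊆ V := by
      intro t ht
      apply hball
      rw [Real.ball_eq_Ioo]
      exact ht
    set s : ℕ → Set ℝ := fun n => f^[n + 1] '' (V₀ ∩ I) with hs
    have hsconn : ∀ n, IsPreconnected (s n) := by
      intro n
      exact ((Set.ordConnected_Ioo.inter Set.ordConnected_Icc).isPreconnected).image
        _ ((hiterC (n + 1)).mono Set.inter_subset_right)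
    have hps : ∀ n, p ∈ s n := fun n => ⟨p, ⟨hpV₀, hp⟩, hiterp (n + 1)⟩
    have hU : IsPreconnected (⋃ n, s n) :=
      isPreconnected_iUnion ⟨p, Set.mem_iInter.mpr hps⟩ hsconn
    have hmemU : ∀ w : ℝ, (∃ n : ℕ, 1 ≤ n ∧ w ∈ f^[n] '' (V₀ ∩ I)) → w ∈ ⋃ n, s n := by
      rintro w ⟨n, hn1, hw⟩
      obtain ⟨m, rfl⟩ := Nat.exists_eq_add_of_le hn1
      exact Set.mem_iUnion.mpr ⟨m, by simpa [hs, Nat.add_comm] using hw⟩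
    have hxU : x ∈ ⋃ n, s n := hmemU x (hx V₀ hV₀open hpV₀)
    have hyU : y ∈ ⋃ n, s n := hmemU y (hy V₀ hV₀open hpV₀)
    have hzU : z ∈ ⋃ n, s n := hU.ordConnected.out hxU hyU hz
    obtain ⟨n, hzn⟩ := Set.mem_iUnion.mp hzU
    refine ⟨n + 1, by omega, ?_⟩
    exact Set.image_mono (Set.inter_subset_inter_left _ hV₀sub) hzn
  exact ⟨⟨⟨p, hpmem⟩, hord.isPreconnected⟩, hpmem, hinv⟩
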